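/- The PATRICIA contraction Φ maps the set S_n of radix sort trees with n leaves onto the set S̄_n of full binary trees with n leaves, and Φ preserves the number of leaves. -/
import Mathlib

/-- A set of finite binary words is prefix-closed. -/
def PrefixClosed (t : Set (List Bool)) : Prop :=
  ∀ v ∈ t, ∀ u : List Bool, u <+: v → u ∈ t

/-- `v` is a leaf of the finite tree `t`: it belongs to `t` and has no proper extension in `t`. -/
def IsTreeLeaf (t : Finset (List Bool)) (v : List Bool) : Prop :=
  v ∈ t ∧ ∀ w ∈ t, v <+: w → w = v

/-- The number of leaves of a finite tree. -/
def leafCount (t : Finset (List Bool)) : ℕ :=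
  (t.filter fun v => ∀ w ∈ t, v <+: w → w = v).card

/-- A full binary tree: nonempty, prefix-closed, and every non-leaf vertex has both children. -/
def FullBinTree (t : Finset (List Bool)) : Prop :=
  t.Nonempty ∧ PrefixClosed ↑t ∧
    ∀ v ∈ t, (v ++ [false] ∈ t ∨ v ++ [true] ∈ t) →
      (v ++ [false] ∈ t ∧ v ++ [true] ∈ t)
/-- The class of radix sort trees: either the trivial tree `{∅}` or a nonempty,
prefix-closed finite binary tree with at least two leaves in which the sibling of
every leaf is also a vertex. -/
def RadixTree (s : Finset (List Bool)) : Prop :=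
  s.Nonempty ∧ PrefixClosed ↑s ∧
    (s = {([] : List Bool)} ∨
      (2 ≤ leafCount s ∧ ∀ v ∈ s, IsTreeLeaf s v →
        ∀ (u : List Bool) (b : Bool), v = u ++ [b] → u ++ [!b] ∈ s))

/-- The PATRICIA address of a vertex `v` of `s`: the word recording, for every strict
ancestor of `v` that has out-degree 2 in `s`, the next letter of `v` after it.  This
realizes the deletion of all out-degree-1 vertices. -/
def contract (s : Finset (List Bool)) (v : List Bool) : List Bool :=
  (List.range v.length).filterMap fun k =>
    if (v.take k ++ [false]) ∈ s ∧ (v.take k ++ [true]) ∈ s then v[k]? else none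

/-- The PATRICIA contraction `Φ` of a tree `s`: the image under `contract s` of the
vertices of `s` of out-degree 0 or 2. -/
def patricia (s : Finset (List Bool)) : Finset (List Bool) :=
  (s.filter fun v =>
      (∀ w ∈ s, v <+: w → w = v) ∨
        ((v ++ [false]) ∈ s ∧ (v ++ [true]) ∈ s)).image (contract s)

/-! ### Auxiliary lemmas -/


lemma contract_nil (s : Finset (List Bool)) : contract s [] = [] := rfl

lemma contract_snoc (s : Finset (List Bool)) (v : List Bool) (c : Bool) :
    contract s (v ++ [c]) =
      contract s v ++ (if (v ++ [false]) ∈ s ∧ (v ++ [true]) ∈ s then [c] else []) := by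
  unfold contract
  rw [List.length_append, List.length_singleton, List.range_succ, List.filterMap_append]
  congr 1
  · apply List.filterMap_congr
    intro k hk
    rw [List.mem_range] at hk
    rw [List.take_append_of_le_length hk.le, List.getElem?_append_left hk]
  · have h1 : (v ++ [c]).take v.length = v := by simp
    have h2 : (v ++ [c])[v.length]? = some c := by simp
    simp only [List.filterMap_cons, List.filterMap_nil, h1, h2]
    split_ifs <;> simp

lemma contract_prefix (s : Finset (List Bool)) {u v : List Bool} (h : u <+: v) :
    contract s u <+: contract s v := by
  induction v using List.reverseRecOn with
  | nil => rw [List.prefix_nil.mp h]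
  | append_singleton v c ih =>
    rcases List.prefix_concat_iff.mp h with rfl | h'
    · exact List.prefix_rfl
    · exact (ih h').trans (by rw [contract_snoc]; exact List.prefix_append _ _)

lemma mem_patricia_iff (s : Finset (List Bool)) (w : List Bool) :
    w ∈ patricia s ↔ ∃ v ∈ s,
      ((∀ w' ∈ s, v <+: w' → w' = v) ∨ ((v ++ [false]) ∈ s ∧ (v ++ [true]) ∈ s)) ∧
        contract s v = w := by
  simp [patricia, Finset.mem_image, Finset.mem_filter, and_assoc]

lemma child_prefix {u w : List Bool} (h : u <+: w) (hne : w ≠ u) :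
    ∃ c, u ++ [c] <+: w := by
  have hlt : u.length < w.length := by
    refine lt_of_le_of_ne h.length_le fun hl => hne (h.eq_of_length hl).symm
  refine ⟨w[u.length]'hlt, ?_⟩
  have h1 : w.take u.length = u := (List.prefix_iff_eq_take.mp h).symm
  have h2 : w.take (u.length + 1) = u ++ [w[u.length]'hlt] := by
    rw [List.take_succ, h1, List.getElem?_eq_getElem hlt]
    rfl
  rw [← h2]; exact List.take_prefix _ _

lemma descend (s : Finset (List Bool)) (hpc : PrefixClosed ↑s) :
    ∀ (m : ℕ) (u : List Bool), u ∈ s → (∀ w ∈ s, w.length ≤ u.length + m) →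
      ∃ u' ∈ s,
        ((∀ w ∈ s, u' <+: w → w = u') ∨ ((u' ++ [false]) ∈ s ∧ (u' ++ [true]) ∈ s)) ∧
          contract s u' = contract s u := by
  intro m
  induction m with
  | zero =>
    intro u hu hb
    refine ⟨u, hu, Or.inl fun w hw hpre => ?_, rfl⟩
    exact (hpre.eq_of_length (le_antisymm hpre.length_le (by simpa using hb w hw))).symm
  | succ m ih =>
    intro u hu hb
    by_cases hF : (∀ w ∈ s, u <+: w → w = u) ∨ ((u ++ [false]) ∈ s ∧ (u ++ [true]) ∈ s)
    · exact ⟨u, hu, hF, rfl⟩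
    · push_neg at hF
      obtain ⟨⟨w, hw, hpre, hne⟩, hnb⟩ := hF
      obtain ⟨c, hc⟩ := child_prefix hpre hne
      have hcs : u ++ [c] ∈ s := hpc w hw _ hc
      have hcontract : contract s (u ++ [c]) = contract s u := by
        rw [contract_snoc, if_neg, List.append_nil]
        intro hbb; exact hnb hbb.1 hbb.2
      obtain ⟨u', hu', hF', hc'⟩ := ih (u ++ [c]) hcs (fun w hw => by
        have := hb w hw; simp only [List.length_append, List.length_singleton]; omega)
      exact ⟨u', hu', hF', by rw [hc', hcontract]⟩

lemma descend' (s : Finset (List Bool)) (hpc : PrefixClosed ↑s) {u : List Bool} (hu : u ∈ s) :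
    ∃ u' ∈ s,
      ((∀ w ∈ s, u' <+: w → w = u') ∨ ((u' ++ [false]) ∈ s ∧ (u' ++ [true]) ∈ s)) ∧
        contract s u' = contract s u :=
  descend s hpc (s.sup List.length) u hu fun w hw =>
    (Finset.le_sup (f := List.length) hw).trans (Nat.le_add_left _ _)

lemma contract_mem_patricia (s : Finset (List Bool)) (hpc : PrefixClosed ↑s)
    {u : List Bool} (hu : u ∈ s) : contract s u ∈ patricia s := by
  obtain ⟨u', hu', hF', hc'⟩ := descend' s hpc hu
  exact (mem_patricia_iff s _).mpr ⟨u', hu', hF', hc'⟩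

lemma exists_diff : ∀ (v v' : List Bool), ¬ v <+: v' → ¬ v' <+: v →
    ∃ p c c', c ≠ c' ∧ p ++ [c] <+: v ∧ p ++ [c'] <+: v' := by
  intro v
  induction v with
  | nil => intro v' h1 _; exact absurd List.nil_prefix h1
  | cons a v₁ ih =>
    intro v' h1 h2
    cases v' with
    | nil => exact absurd List.nil_prefix h2
    | cons b v₁' =>
      by_cases hab : a = b
      · subst hab
        have h1' : ¬ v₁ <+: v₁' := fun h => h1 (List.cons_prefix_cons.mpr ⟨rfl, h⟩)
        have h2' : ¬ v₁' <+: v₁ := fun h => h2 (List.cons_prefix_cons.mpr ⟨rfl, h⟩)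
        obtain ⟨p, c, c', hcc, hp1, hp2⟩ := ih v₁' h1' h2'
        exact ⟨a :: p, c, c', hcc, List.cons_prefix_cons.mpr ⟨rfl, hp1⟩,
          List.cons_prefix_cons.mpr ⟨rfl, hp2⟩⟩
      · exact ⟨[], a, b, hab, List.cons_prefix_cons.mpr ⟨rfl, List.nil_prefix⟩,
          List.cons_prefix_cons.mpr ⟨rfl, List.nil_prefix⟩⟩

lemma diverge (s : Finset (List Bool)) (hpc : PrefixClosed ↑s) {v v' : List Bool}
    (hv : v ∈ s) (hv' : v' ∈ s) (h1 : ¬ v <+: v') (h2 : ¬ v' <+: v) :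
    ¬ contract s v <+: contract s v' := by
  obtain ⟨p, c, c', hcc, hp1, hp2⟩ := exists_diff v v' h1 h2
  have hc1 : p ++ [c] ∈ s := hpc v hv _ hp1
  have hc2 : p ++ [c'] ∈ s := hpc v' hv' _ hp2
  have hbr : (p ++ [false]) ∈ s ∧ (p ++ [true]) ∈ s := by
    cases c <;> cases c' <;> simp_all
  have e1 : contract s p ++ [c] <+: contract s v := by
    have := contract_prefix s hp1
    rwa [contract_snoc, if_pos hbr] at this
  have e2 : contract s p ++ [c'] <+: contract s v' := by
    have := contract_prefix s hp2
    rwa [contract_snoc, if_pos hbr] at this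
  intro hle
  have e1' : contract s p ++ [c] <+: contract s v' := e1.trans hle
  have := List.prefix_of_prefix_length_le e1' e2 (by simp)
  have := this.eq_of_length (by simp)
  exact hcc (by simpa using this)

lemma eq_of_prefix_contract_eq (s : Finset (List Bool)) {u v : List Bool}
    (hF : (∀ w ∈ s, u <+: w → w = u) ∨ ((u ++ [false]) ∈ s ∧ (u ++ [true]) ∈ s))
    (hv : v ∈ s) (hpre : u <+: v) (hc : contract s u = contract s v) : u = v := by
  rcases hF with hleaf | hbr
  · exact (hleaf v hv hpre).symm
  · by_contra hne
    obtain ⟨c, hcp⟩ := child_prefix hpre (Ne.symm hne)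
    have e1 : contract s u ++ [c] <+: contract s v := by
      have := contract_prefix s hcp
      rwa [contract_snoc, if_pos hbr] at this
    rw [← hc] at e1
    have := e1.length_le
    simp at this

lemma contract_injOn (s : Finset (List Bool)) (hpc : PrefixClosed ↑s) {v v' : List Bool}
    (hv : v ∈ s)
    (hFv : (∀ w ∈ s, v <+: w → w = v) ∨ ((v ++ [false]) ∈ s ∧ (v ++ [true]) ∈ s))
    (hv' : v' ∈ s)
    (hFv' : (∀ w ∈ s, v' <+: w → w = v') ∨ ((v' ++ [false]) ∈ s ∧ (v' ++ [true]) ∈ s))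
    (hc : contract s v = contract s v') : v = v' := by
  by_cases h1 : v <+: v'
  · exact eq_of_prefix_contract_eq s hFv hv' h1 hc
  · by_cases h2 : v' <+: v
    · exact (eq_of_prefix_contract_eq s hFv' hv h2 hc.symm).symm
    · exact absurd (hc ▸ List.prefix_rfl) (diverge s hpc hv hv' h1 h2)

lemma patricia_leaf_filter (s : Finset (List Bool)) (hpc : PrefixClosed ↑s) :
    (patricia s).filter (fun w => ∀ w' ∈ patricia s, w <+: w' → w' = w)
      = (s.filter (fun v => ∀ w ∈ s, v <+: w → w = v)).image (contract s) := by
  ext w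
  simp only [Finset.mem_filter, Finset.mem_image]
  constructor
  · rintro ⟨hwmem, hwleaf⟩
    obtain ⟨v, hv, hFv, hcv⟩ := (mem_patricia_iff s w).mp hwmem
    refine ⟨v, ⟨hv, ?_⟩, hcv⟩
    rcases hFv with hleaf | hbr
    · exact hleaf
    · exfalso
      have htr : contract s (v ++ [true]) ∈ patricia s :=
        contract_mem_patricia s hpc hbr.2
      rw [contract_snoc, if_pos hbr, hcv] at htr
      have := hwleaf _ htr (List.prefix_append _ _)
      simpa using congrArg List.length this
  · rintro ⟨v, ⟨hvs, hvleaf⟩, hcv⟩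
    subst hcv
    refine ⟨(mem_patricia_iff s _).mpr ⟨v, hvs, Or.inl hvleaf, rfl⟩, ?_⟩
    intro w' hw' hpre
    obtain ⟨v', hv', hFv', hcv'⟩ := (mem_patricia_iff s w').mp hw'
    subst hcv'
    by_cases h1 : v <+: v'
    · rw [hvleaf v' hv' h1]
    · by_cases h2 : v' <+: v
      · exact ((contract_prefix s h2).eq_of_length
          (le_antisymm (contract_prefix s h2).length_le hpre.length_le)).symm ▸ rfl
      · exact absurd hpre (diverge s hpc hvs hv' h1 h2)

lemma leafCount_patricia (s : Finset (List Bool)) (hpc : PrefixClosed ↑s) :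
    leafCount (patricia s) = leafCount s := by
  unfold leafCount
  rw [patricia_leaf_filter s hpc]
  apply Finset.card_image_of_injOn
  intro v hv v' hv' hc
  obtain ⟨hvs, hvleaf⟩ := Finset.mem_filter.mp hv
  obtain ⟨hv's, hv'leaf⟩ := Finset.mem_filter.mp hv'
  exact contract_injOn s hpc hvs (Or.inl hvleaf) hv's (Or.inl hv'leaf) hc

lemma prefix_mem_patricia (s : Finset (List Bool)) (hpc : PrefixClosed ↑s) (hnil : [] ∈ s) :
    ∀ v ∈ s, ∀ u, u <+: contract s v → ∃ p ∈ s, contract s p = u := by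
  intro v
  induction v using List.reverseRecOn with
  | nil =>
    intro _ u hu
    have hu' : u = [] := List.prefix_nil.mp (by simpa [contract_nil] using hu)
    exact ⟨[], hnil, by rw [hu', contract_nil]⟩
  | append_singleton v c ih =>
    intro hvc u hu
    have hvs : v ∈ s := hpc _ hvc _ (List.prefix_append _ _)
    rw [contract_snoc] at hu
    split_ifs at hu with hbr
    · rcases List.prefix_concat_iff.mp hu with rfl | hu'
      · exact ⟨v ++ [c], hvc, by rw [contract_snoc, if_pos hbr]⟩
      · exact ih hvs u hu'
    · rw [List.append_nil] at hu
      exact ih hvs u hu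

lemma last_branch (s : Finset (List Bool)) (hpc : PrefixClosed ↑s) :
    ∀ v ∈ s, ∀ (w : List Bool) (b : Bool), contract s v = w ++ [b] →
      ∃ p, (p ++ [false]) ∈ s ∧ (p ++ [true]) ∈ s ∧ contract s p = w := by
  intro v
  induction v using List.reverseRecOn with
  | nil => intro _ w b h; exact absurd (congrArg List.length h) (by simp [contract_nil])
  | append_singleton v c ih =>
    intro hvc w b h
    have hvs : v ∈ s := hpc _ hvc _ (List.prefix_append _ _)
    rw [contract_snoc] at h
    split_ifs at h with hbr
    · obtain ⟨h1, _⟩ := List.append_inj' h rfl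
      exact ⟨v, hbr.1, hbr.2, h1⟩
    · rw [List.append_nil] at h
      exact ih hvs w b h

lemma full_patricia (s : Finset (List Bool)) (hne : s.Nonempty) (hpc : PrefixClosed ↑s) :
    FullBinTree (patricia s) := by
  have hnil : [] ∈ s := by
    obtain ⟨v, hv⟩ := hne
    exact hpc v hv [] List.nil_prefix
  refine ⟨⟨[], ?_⟩, ?_, ?_⟩
  · have := contract_mem_patricia s hpc hnil
    rwa [contract_nil] at this
  · intro w hw u hu
    rw [Finset.mem_coe, mem_patricia_iff] at hw
    obtain ⟨v, hv, _, hcv⟩ := hw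
    obtain ⟨p, hp, hcp⟩ := prefix_mem_patricia s hpc hnil v hv u (hcv ▸ hu)
    rw [Finset.mem_coe]
    exact hcp ▸ contract_mem_patricia s hpc hp
  · intro w hw hor
    have key : ∀ b : Bool, w ++ [b] ∈ patricia s →
        (w ++ [false] ∈ patricia s ∧ w ++ [true] ∈ patricia s) := by
      intro b hb
      obtain ⟨v, hv, _, hcv⟩ := (mem_patricia_iff s _).mp hb
      obtain ⟨p, hpf, hpt, hcp⟩ := last_branch s hpc v hv w b hcv
      constructor
      · have := contract_mem_patricia s hpc hpf
        rwa [contract_snoc, if_pos ⟨hpf, hpt⟩, hcp] at this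
      · have := contract_mem_patricia s hpc hpt
        rwa [contract_snoc, if_pos ⟨hpf, hpt⟩, hcp] at this
    rcases hor with hb | hb
    · exact key false hb
    · exact key true hb

/-! ### Full binary trees are radix trees fixed by `patricia` -/

lemma full_contract_id {t : Finset (List Bool)} (ht : FullBinTree t) :
    ∀ v ∈ t, contract t v = v := by
  intro v
  induction v using List.reverseRecOn with
  | nil => intro _; exact contract_nil t
  | append_singleton v c ih =>
    intro hvc
    have hvs : v ∈ t := ht.2.1 _ hvc _ (List.prefix_append _ _)
    have hbr : (v ++ [false]) ∈ t ∧ (v ++ [true]) ∈ t := by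
      apply ht.2.2 v hvs
      cases c with
      | false => exact Or.inl hvc
      | true => exact Or.inr hvc
    rw [contract_snoc, if_pos hbr, ih hvs]

lemma full_F {t : Finset (List Bool)} (ht : FullBinTree t) {v : List Bool} (hv : v ∈ t) :
    (∀ w ∈ t, v <+: w → w = v) ∨ ((v ++ [false]) ∈ t ∧ (v ++ [true]) ∈ t) := by
  by_cases hleaf : ∀ w ∈ t, v <+: w → w = v
  · exact Or.inl hleaf
  · push_neg at hleaf
    obtain ⟨w, hw, hpre, hne⟩ := hleaf
    obtain ⟨c, hcp⟩ := child_prefix hpre hne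
    have hcs : v ++ [c] ∈ t := ht.2.1 w hw _ hcp
    refine Or.inr (ht.2.2 v hv ?_)
    cases c with
    | false => exact Or.inl hcs
    | true => exact Or.inr hcs

lemma patricia_full {t : Finset (List Bool)} (ht : FullBinTree t) : patricia t = t := by
  ext w
  rw [mem_patricia_iff]
  constructor
  · rintro ⟨v, hv, _, hcv⟩
    rw [full_contract_id ht v hv] at hcv
    exact hcv ▸ hv
  · intro hw
    exact ⟨w, hw, full_F ht hw, full_contract_id ht w hw⟩

lemma exists_leaf_ext (t : Finset (List Bool)) {v : List Bool} (hv : v ∈ t) :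
    ∃ ℓ ∈ t, v <+: ℓ ∧ ∀ w ∈ t, ℓ <+: w → w = ℓ := by
  obtain ⟨ℓ, hℓ, hmax⟩ := Finset.exists_max_image (t.filter fun w => v <+: w) List.length
    ⟨v, Finset.mem_filter.mpr ⟨hv, List.prefix_rfl⟩⟩
  obtain ⟨hℓt, hℓpre⟩ := Finset.mem_filter.mp hℓ
  refine ⟨ℓ, hℓt, hℓpre, fun w hw hpre => ?_⟩
  have hwmem : w ∈ t.filter fun w => v <+: w :=
    Finset.mem_filter.mpr ⟨hw, hℓpre.trans hpre⟩
  exact (hpre.eq_of_length (le_antisymm hpre.length_le (hmax w hwmem))).symm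

lemma two_leaves {t : Finset (List Bool)} (ht : FullBinTree t) (hne : t ≠ {[]}) :
    2 ≤ leafCount t := by
  have hnil : [] ∈ t := by
    obtain ⟨v, hv⟩ := ht.1
    exact ht.2.1 v hv [] List.nil_prefix
  have hex : ∃ v ∈ t, v ≠ ([] : List Bool) := by
    by_contra h
    push_neg at h
    exact hne (Finset.eq_singleton_iff_unique_mem.mpr ⟨hnil, h⟩)
  obtain ⟨v, hv, hvne⟩ := hex
  have hbr : ([false] : List Bool) ∈ t ∧ ([true] : List Bool) ∈ t := by
    obtain ⟨b, rest, rfl⟩ : ∃ b rest, v = b :: rest := by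
      cases v with
      | nil => exact absurd rfl hvne
      | cons b rest => exact ⟨b, rest, rfl⟩
    have hbm : [b] ∈ t := ht.2.1 _ hv _ (List.cons_prefix_cons.mpr ⟨rfl, List.nil_prefix⟩)
    have hor : ([] : List Bool) ++ [false] ∈ t ∨ ([] : List Bool) ++ [true] ∈ t := by
      cases b with
      | false => exact Or.inl hbm
      | true => exact Or.inr hbm
    have := ht.2.2 [] hnil hor
    simpa using this
  obtain ⟨ℓ0, hℓ0t, hℓ0p, hℓ0leaf⟩ := exists_leaf_ext t hbr.1
  obtain ⟨ℓ1, hℓ1t, hℓ1p, hℓ1leaf⟩ := exists_leaf_ext t hbr.2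
  have hℓne : ℓ0 ≠ ℓ1 := by
    intro h
    subst h
    have := List.prefix_of_prefix_length_le hℓ0p hℓ1p (by simp)
    simpa using (this.eq_of_length (by simp))
  have hsub : ({ℓ0, ℓ1} : Finset (List Bool)) ⊆
      t.filter fun v => ∀ w ∈ t, v <+: w → w = v := by
    intro x hx
    rcases Finset.mem_insert.mp hx with rfl | hx
    · exact Finset.mem_filter.mpr ⟨hℓ0t, hℓ0leaf⟩
    · rw [Finset.mem_singleton] at hx
      subst hx
      exact Finset.mem_filter.mpr ⟨hℓ1t, hℓ1leaf⟩
  calc 2 = ({ℓ0, ℓ1} : Finset (List Bool)).card := (Finset.card_pair hℓne).symm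
    _ ≤ _ := Finset.card_le_card hsub

lemma radix_of_full {t : Finset (List Bool)} (ht : FullBinTree t) : RadixTree t := by
  refine ⟨ht.1, ht.2.1, ?_⟩
  by_cases h : t = {([] : List Bool)}
  · exact Or.inl h
  · refine Or.inr ⟨two_leaves ht h, ?_⟩
    rintro v hv _ u b rfl
    have hus : u ∈ t := ht.2.1 _ hv _ (List.prefix_append _ _)
    have hor : u ++ [false] ∈ t ∨ u ++ [true] ∈ t := by
      cases b with
      | false => exact Or.inl hv
      | true => exact Or.inr hv
    have hbr := ht.2.2 u hus hor
    cases b with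
    | false => exact hbr.2
    | true => exact hbr.1

/-- The PATRICIA contraction `Φ` maps the set of radix sort trees with `n` leaves onto
the set of full binary trees with `n` leaves, preserving the number of leaves. -/
theorem patricia_maps_onto (n : ℕ) (hn : 1 ≤ n) :
    (∀ s : Finset (List Bool), RadixTree s → leafCount s = n →
        FullBinTree (patricia s) ∧ leafCount (patricia s) = n) ∧
      (∀ t : Finset (List Bool), FullBinTree t → leafCount t = n →
        ∃ s : Finset (List Bool), RadixTree s ∧ leafCount s = n ∧ patricia s = t) := by
  constructor
  · intro s hs hcount
    exact ⟨full_patricia s hs.1 hs.2.1, by rw [leafCount_patricia s hs.2.1, hcount]⟩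
  · intro t ht hcount
    exact ⟨t, radix_of_full ht, hcount, patricia_full ht⟩
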